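/- (Query lower bound form of the main theorem.) With the query model as defined in the context, let (Π_y)_{y ∈ Fin N} be orthogonal projections on H with pairwise orthogonal ranges, and let ψ be the final state of the q-query algorithm. If the success probability satisfies ∑_{y ∈ Fin N} ‖(Π_y ⊗ |e_y⟩⟨e_y|) ψ‖² ≥ p for some real p ≥ 0, then q ≥ p·N − 1. In other words, any algorithm that p-solves the N-phase distinguishing problem must make at least p·N − 1 queries. -/

import Mathlib

set_option linter.unusedSectionVars false
set_option maxHeartbeats 1000000


open scoped Kronecker Matrix

noncomputable section

/-- `ω N = exp(2πi/N)`, the primitive `N`-th root of unity. -/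
def ω (N : ℕ) : ℂ := Complex.exp (2 * Real.pi * Complex.I / N)

/-- The computational (standard) basis vector `e_y` of `EuclideanSpace ℂ (Fin N)`. -/
def e (N : ℕ) (y : Fin N) : EuclideanSpace ℂ (Fin N) := EuclideanSpace.single y 1

/-- The Fourier basis vector `k̂ = (1/√N) ∑_y ω_N^{k·y} • e_y`. -/
def fHat (N : ℕ) (k : Fin N) : EuclideanSpace ℂ (Fin N) :=
  (↑(Real.sqrt N))⁻¹ • ∑ y : Fin N, ω N ^ ((k : ℕ) * (y : ℕ)) • e N y

/-- The tensor product of two Euclidean vectors, realized concretely: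
`(x ⊗ z) (i, j) = x i * z j`. -/
def tp {ι κ : Type*} [Fintype ι] [Fintype κ]
    (x : EuclideanSpace ℂ ι) (z : EuclideanSpace ℂ κ) : EuclideanSpace ℂ (ι × κ) :=
  (EuclideanSpace.equiv (ι × κ) ℂ).symm fun p => x p.1 * z p.2

variable {ιV ιW : Type*} [Fintype ιV] [DecidableEq ιV] [Fintype ιW] [DecidableEq ιW]

/-- The matrix `|u⟩⟨u|` of the orthogonal projection `P_u` onto `ℂ ∙ u`
(for a unit vector `u`). -/
def PuM (u : EuclideanSpace ℂ ιV) : Matrix ιV ιV ℂ :=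
  Matrix.of fun i j => u i * star (u j)

/-- The matrix of `U_y = ω_N^y • P_u + (id - P_u)` on `V`. -/
def UyM (N : ℕ) (u : EuclideanSpace ℂ ιV) (y : Fin N) : Matrix ιV ιV ℂ :=
  ω N ^ (y : ℕ) • PuM u + (1 - PuM u)

/-- The matrix of the controlled unitary `cU_y = |0⟩⟨0| ⊗ id_V + |1⟩⟨1| ⊗ U_y` on `ℂ² ⊗ V`. -/
def cUyM (N : ℕ) (u : EuclideanSpace ℂ ιV) (y : Fin N) : Matrix (Fin 2 × ιV) (Fin 2 × ιV) ℂ :=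
  Matrix.single 0 0 (1 : ℂ) ⊗ₖ (1 : Matrix ιV ιV ℂ)
    + Matrix.single 1 1 (1 : ℂ) ⊗ₖ UyM N u y

/-- The matrix of the coherent oracle `c𝔘 = ∑_y (cU_y ⊗ id_W) ⊗ |e_y⟩⟨e_y|` on
`H ⊗ EuclideanSpace ℂ (Fin N)`, where `H = ℂ² ⊗ V ⊗ W`. -/
def oracleM (N : ℕ) (u : EuclideanSpace ℂ ιV) (ιW : Type*) [Fintype ιW] [DecidableEq ιW] :
    Matrix (((Fin 2 × ιV) × ιW) × Fin N) (((Fin 2 × ιV) × ιW) × Fin N) ℂ :=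
  ∑ y : Fin N, (cUyM N u y ⊗ₖ (1 : Matrix ιW ιW ℂ)) ⊗ₖ Matrix.single y y (1 : ℂ)

end

noncomputable section

/-- The total operator (as a matrix) of a `q`-query algorithm:
`algOp A orc q = (A_q ⊗ id) * orc * (A_{q-1} ⊗ id) * ⋯ * orc * (A_0 ⊗ id)`. -/
def algOp {idx : Type*} [Fintype idx] [DecidableEq idx] {N : ℕ}
    (A : ℕ → Matrix idx idx ℂ) (orc : Matrix (idx × Fin N) (idx × Fin N) ℂ) :
    ℕ → Matrix (idx × Fin N) (idx × Fin N) ℂ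
  | 0 => A 0 ⊗ₖ (1 : Matrix (Fin N) (Fin N) ℂ)
  | q + 1 => (A (q + 1) ⊗ₖ (1 : Matrix (Fin N) (Fin N) ℂ)) * orc * algOp A orc q

end

namespace QLB
open Matrix
noncomputable section

variable {ι κ : Type*} [Fintype ι] [Fintype κ]

lemma tp_apply (x : EuclideanSpace ℂ ι) (z : EuclideanSpace ℂ κ) (i : ι) (j : κ) :
    tp x z (i, j) = x i * z j := rfl

lemma tp_apply' (x : EuclideanSpace ℂ ι) (z : EuclideanSpace ℂ κ) (p : ι × κ) :
    tp x z p = x p.1 * z p.2 := rfl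

lemma euclid_ext {x y : EuclideanSpace ℂ ι} (h : ∀ i, x i = y i) : x = y := PiLp.ext h

lemma toE_apply [DecidableEq ι] (M : Matrix ι ι ℂ) (x : EuclideanSpace ℂ ι) (i : ι) :
    Matrix.toEuclideanLin M x i = M.mulVec x i := rfl

lemma tp_add_left (x x' : EuclideanSpace ℂ ι) (z : EuclideanSpace ℂ κ) :
    tp (x + x') z = tp x z + tp x' z := by
  apply euclid_ext; rintro ⟨i, j⟩
  simp [tp_apply, add_mul]

lemma tp_smul_left (c : ℂ) (x : EuclideanSpace ℂ ι) (z : EuclideanSpace ℂ κ) :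
    tp (c • x) z = c • tp x z := by
  apply euclid_ext; rintro ⟨i, j⟩
  simp [tp_apply, mul_assoc]

lemma tp_smul_right (c : ℂ) (x : EuclideanSpace ℂ ι) (z : EuclideanSpace ℂ κ) :
    tp x (c • z) = c • tp x z := by
  apply euclid_ext; rintro ⟨i, j⟩
  simp [tp_apply]
  ring

lemma tp_zero_left (z : EuclideanSpace ℂ κ) : tp (0 : EuclideanSpace ℂ ι) z = 0 := by
  apply euclid_ext; rintro ⟨i, j⟩
  simp [tp_apply]

lemma tp_sum_left {α : Type*} (s : Finset α) (x : α → EuclideanSpace ℂ ι)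
    (z : EuclideanSpace ℂ κ) :
    tp (∑ a ∈ s, x a) z = ∑ a ∈ s, tp (x a) z := by
  classical
  induction s using Finset.induction with
  | empty => simp [tp_zero_left]
  | insert a s h ih => simp [Finset.sum_insert h, tp_add_left, ih]

lemma inner_tp (x x' : EuclideanSpace ℂ ι) (z z' : EuclideanSpace ℂ κ) :
    (inner ℂ (tp x z) (tp x' z') : ℂ) = (inner ℂ x x' : ℂ) * (inner ℂ z z' : ℂ) := by
  simp only [PiLp.inner_apply, RCLike.inner_apply]
  rw [Fintype.sum_prod_type, Finset.sum_mul_sum]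
  apply Finset.sum_congr rfl; intro i _
  apply Finset.sum_congr rfl; intro j _
  simp [tp_apply, _root_.map_mul]
  ring

lemma norm_tp_sq (x : EuclideanSpace ℂ ι) (z : EuclideanSpace ℂ κ) :
    ‖tp x z‖ ^ 2 = ‖x‖ ^ 2 * ‖z‖ ^ 2 := by
  have h1 := inner_self_eq_norm_sq (𝕜 := ℂ) (tp x z)
  rw [← h1, inner_tp]
  rw [inner_self_eq_norm_sq_to_K (𝕜 := ℂ) x, inner_self_eq_norm_sq_to_K (𝕜 := ℂ) z]
  norm_cast

lemma toE_kron [DecidableEq ι] [DecidableEq κ] (M : Matrix ι ι ℂ) (B : Matrix κ κ ℂ) (x : EuclideanSpace ℂ ι)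
    (z : EuclideanSpace ℂ κ) :
    Matrix.toEuclideanLin (M ⊗ₖ B) (tp x z)
      = tp (Matrix.toEuclideanLin M x) (Matrix.toEuclideanLin B z) := by
  apply euclid_ext; rintro ⟨i, j⟩
  rw [tp_apply, toE_apply, toE_apply, toE_apply]
  simp only [Matrix.mulVec, dotProduct, Matrix.kroneckerMap_apply]
  rw [Fintype.sum_prod_type, Finset.sum_mul_sum]
  apply Finset.sum_congr rfl; intro a _
  apply Finset.sum_congr rfl; intro b _
  rw [tp_apply']
  ring

lemma toE_one [DecidableEq ι] (x : EuclideanSpace ℂ ι) : Matrix.toEuclideanLin (1 : Matrix ι ι ℂ) x = x := by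
  apply euclid_ext; intro i
  rw [toE_apply, Matrix.one_mulVec]

lemma toE_mul [DecidableEq ι] (M N : Matrix ι ι ℂ) (x : EuclideanSpace ℂ ι) :
    Matrix.toEuclideanLin (M * N) x = Matrix.toEuclideanLin M (Matrix.toEuclideanLin N x) := by
  apply euclid_ext; intro i
  rw [toE_apply, toE_apply]
  exact congrFun (Matrix.mulVec_mulVec _ M N).symm i

lemma inner_toE_left [DecidableEq ι] (M : Matrix ι ι ℂ) (x y : EuclideanSpace ℂ ι) :
    (inner ℂ (Matrix.toEuclideanLin M x) y : ℂ) = inner ℂ x (Matrix.toEuclideanLin Mᴴ y) := by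
  rw [Matrix.toEuclideanLin_conjTranspose_eq_adjoint, LinearMap.adjoint_inner_right]





variable {N : ℕ} [NeZero N]

lemma hω : IsPrimitiveRoot (ω N) N := Complex.isPrimitiveRoot_exp N (NeZero.ne N)

lemma ω_pow_N : ω N ^ N = 1 := hω.pow_eq_one

lemma ω_ne_zero : ω N ≠ 0 := Complex.exp_ne_zero _

lemma ω_abs : ‖ω N‖ = 1 := by
  have : (2 * Real.pi * Complex.I / N) = ((2 * Real.pi / N : ℝ) : ℂ) * Complex.I := by
    push_cast; ring
  rw [ω, this, Complex.norm_exp_ofReal_mul_I]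

lemma ω_norm_pow (m : ℕ) : ‖ω N ^ m‖ = 1 := by
  rw [norm_pow, ω_abs, one_pow]

lemma ω_star : star (ω N) = (ω N)⁻¹ := by
  have h : Complex.normSq (ω N) = 1 := by
    rw [← Complex.sq_norm, ω_abs]; norm_num
  rw [Complex.inv_def, h]
  simp

lemma e_apply (y i : Fin N) : e N y i = if i = y then 1 else 0 := by
  simp [e, EuclideanSpace.single_apply]

lemma ω_pow_mod (a : ℕ) : ω N ^ a = ω N ^ (a % N) := by
  conv_lhs => rw [← Nat.div_add_mod a N]
  rw [pow_add, pow_mul, ω_pow_N, one_pow, one_mul]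

lemma fHat_apply (k y : Fin N) : fHat N k y = (↑(Real.sqrt N))⁻¹ * ω N ^ ((k : ℕ) * (y : ℕ)) := by
  simp only [fHat, PiLp.smul_apply, smul_eq_mul]
  rw [WithLp.ofLp_sum, Finset.sum_apply]
  simp only [PiLp.smul_apply, smul_eq_mul, e_apply, mul_ite, mul_one, mul_zero]
  rw [Finset.sum_ite_eq]
  simp only [Finset.mem_univ, if_true]
  rw [Complex.real_smul, Complex.ofReal_inv]

lemma inner_fHat (k l : Fin N) :
    (inner ℂ (fHat N k) (fHat N l) : ℂ) = if k = l then 1 else 0 := by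
  simp only [PiLp.inner_apply, RCLike.inner_apply, fHat_apply]
  have hsq : (starRingEnd ℂ) ((↑(Real.sqrt N))⁻¹ : ℂ) = ((↑(Real.sqrt N))⁻¹ : ℂ) := by
    simp [Complex.conj_ofReal]
  have h2 : ((↑(Real.sqrt N) : ℂ))⁻¹ * (↑(Real.sqrt N) : ℂ)⁻¹ = ((N : ℂ))⁻¹ := by
    rw [← mul_inv]
    congr 1
    exact_mod_cast Real.mul_self_sqrt (Nat.cast_nonneg N)
  set ζ : ℂ := star (ω N) ^ (k : ℕ) * ω N ^ (l : ℕ) with hζdef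
  have key : ∀ x : Fin N,
      (starRingEnd ℂ) ((↑(Real.sqrt N) : ℂ)⁻¹ * ω N ^ ((k : ℕ) * (x : ℕ)))
        * ((↑(Real.sqrt N) : ℂ)⁻¹ * ω N ^ ((l : ℕ) * (x : ℕ)))
      = ((N : ℂ))⁻¹ * ζ ^ (x : ℕ) := by
    intro x
    rw [_root_.map_mul, hsq, map_pow]
    have hc : (starRingEnd ℂ) (ω N) = star (ω N) := rfl
    rw [hc, hζdef, mul_pow, ← pow_mul, ← pow_mul, ← h2]
    ring
  rw [Finset.sum_congr rfl (fun x _ => (mul_comm _ _).trans (key x)), ← Finset.mul_sum]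
  have hsum : ∑ x : Fin N, ζ ^ (x : ℕ) = if k = l then (N : ℂ) else 0 := by
    by_cases hkl : k = l
    · subst hkl
      have hζ1 : ζ = 1 := by
        rw [hζdef, ω_star, inv_pow, inv_mul_cancel₀ (pow_ne_zero _ ω_ne_zero)]
      simp [hζ1]
    · have hζN : ζ ^ N = 1 := by
        rw [hζdef, mul_pow, ← pow_mul, ← pow_mul, mul_comm (k : ℕ) N, mul_comm (l : ℕ) N,
          pow_mul, pow_mul]
        have : star (ω N) ^ N = 1 := by
          rw [← star_pow, ω_pow_N, star_one]
        rw [this, ω_pow_N, one_pow, one_pow, one_mul]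
      have hζne : ζ ≠ 1 := by
        intro habs
        apply hkl
        have : ω N ^ (l : ℕ) = ω N ^ (k : ℕ) := by
          have h3 : star (ω N) ^ (k : ℕ) = (ω N ^ (k : ℕ))⁻¹ := by
            rw [ω_star, inv_pow]
          rw [hζdef, h3, inv_mul_eq_one₀ (pow_ne_zero _ ω_ne_zero)] at habs
          exact habs.symm
        have := hω.pow_inj l.isLt k.isLt this
        exact Fin.ext this.symm
      rw [Fin.sum_univ_eq_sum_range (fun x => ζ ^ x) N, geom_sum_eq hζne, hζN]
      simp [hkl]
  rw [hsum]
  by_cases hkl : k = l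
  · simp only [hkl, if_true]
    rw [inv_mul_cancel₀]
    exact_mod_cast Nat.cast_ne_zero.mpr (NeZero.ne N)
  · simp [hkl]

end

end QLB

namespace QLB
open Matrix
open scoped Kronecker
noncomputable section

section mats
variable {ιV ιW : Type*} [Fintype ιV] [DecidableEq ιV] [Fintype ιW] [DecidableEq ιW]
variable {N : ℕ} [NeZero N]

lemma tp_sub_left {ι κ : Type*} [Fintype ι] [Fintype κ] (x x' : EuclideanSpace ℂ ι)
    (z : EuclideanSpace ℂ κ) : tp (x - x') z = tp x z - tp x' z := by
  apply euclid_ext; rintro ⟨i, j⟩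
  simp [tp_apply, sub_mul]

lemma tp_sum_right {ι κ α : Type*} [Fintype ι] [Fintype κ] (s : Finset α)
    (x : EuclideanSpace ℂ ι) (z : α → EuclideanSpace ℂ κ) :
    tp x (∑ a ∈ s, z a) = ∑ a ∈ s, tp x (z a) := by
  classical
  induction s using Finset.induction with
  | empty =>
    apply euclid_ext; rintro ⟨i, j⟩
    simp [tp_apply]
  | insert a s h ih =>
    rw [Finset.sum_insert h, Finset.sum_insert h, ← ih]
    apply euclid_ext; rintro ⟨i, j⟩
    simp [tp_apply, mul_add]

lemma basis_expand (f : EuclideanSpace ℂ (Fin N)) : f = ∑ y : Fin N, f y • e N y := by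
  apply euclid_ext; intro i
  rw [WithLp.ofLp_sum, Finset.sum_apply]
  simp only [PiLp.smul_apply, smul_eq_mul, e_apply, mul_ite, mul_one, mul_zero]
  rw [Finset.sum_ite_eq]
  simp

lemma tp_expand {ι : Type*} [Fintype ι] (x : EuclideanSpace ℂ ι)
    (f : EuclideanSpace ℂ (Fin N)) :
    tp x f = ∑ y : Fin N, f y • tp x (e N y) := by
  conv_lhs => rw [basis_expand f]
  rw [tp_sum_right]
  exact Finset.sum_congr rfl fun y _ => tp_smul_right _ _ _

lemma kron_conjT {ι κ : Type*} [Fintype ι] [Fintype κ] (A : Matrix ι ι ℂ) (B : Matrix κ κ ℂ) :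
    (A ⊗ₖ B)ᴴ = Aᴴ ⊗ₖ Bᴴ := by
  ext ⟨i, j⟩ ⟨a, b⟩
  simp [Matrix.conjTranspose_apply, Matrix.kroneckerMap_apply, star_mul', mul_comm]

lemma std_conjT : (Matrix.single (1 : Fin 2) 1 (1 : ℂ))ᴴ
    = Matrix.single (1 : Fin 2) 1 (1 : ℂ) := by
  ext a b
  simp [Matrix.conjTranspose_apply, Matrix.single, and_comm]

lemma PuM_sa (u : EuclideanSpace ℂ ιV) : (PuM u)ᴴ = PuM u := by
  ext i j
  simp [Matrix.conjTranspose_apply, PuM, star_mul', mul_comm]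

lemma sum_star_self {u : EuclideanSpace ℂ ιV} (hu : ‖u‖ = 1) :
    ∑ j, star (u j) * u j = (1 : ℂ) := by
  have h := inner_self_eq_norm_sq_to_K (𝕜 := ℂ) u
  rw [hu] at h
  simp only [PiLp.inner_apply, RCLike.inner_apply] at h
  simpa [mul_comm] using h

lemma PuM_idem {u : EuclideanSpace ℂ ιV} (hu : ‖u‖ = 1) : PuM u * PuM u = PuM u := by
  ext i j
  simp only [Matrix.mul_apply, PuM, Matrix.of_apply]
  have h : ∑ l, (u i * star (u l)) * (u l * star (u j))
      = (u i * star (u j)) * ∑ l, star (u l) * u l := by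
    rw [Finset.mul_sum]
    exact Finset.sum_congr rfl fun l _ => by ring
  rw [h, sum_star_self hu, mul_one]

/-- The projection `|1⟩⟨1| ⊗ P_u ⊗ 1` on the full space `H`. -/
def Qm (u : EuclideanSpace ℂ ιV) (ιW : Type*) [Fintype ιW] [DecidableEq ιW] :
    Matrix ((Fin 2 × ιV) × ιW) ((Fin 2 × ιV) × ιW) ℂ :=
  (Matrix.single (1 : Fin 2) 1 (1 : ℂ) ⊗ₖ PuM u) ⊗ₖ (1 : Matrix ιW ιW ℂ)

lemma Qm_sa (u : EuclideanSpace ℂ ιV) : (Qm u ιW)ᴴ = Qm u ιW := by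
  rw [Qm, kron_conjT, kron_conjT, PuM_sa, Matrix.conjTranspose_one, std_conjT]

lemma Qm_idem {u : EuclideanSpace ℂ ιV} (hu : ‖u‖ = 1) : Qm u ιW * Qm u ιW = Qm u ιW := by
  rw [Qm, ← Matrix.mul_kronecker_mul, ← Matrix.mul_kronecker_mul, one_mul,
    Matrix.single_mul_single_same, PuM_idem hu, one_mul]

lemma E_sum : Matrix.single (0 : Fin 2) (0 : Fin 2) (1 : ℂ)
    + Matrix.single (1 : Fin 2) (1 : Fin 2) (1 : ℂ) = 1 := by
  ext a b
  fin_cases a <;> fin_cases b <;>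
    simp [Matrix.single, Matrix.one_apply]

lemma cUy_eq (u : EuclideanSpace ℂ ιV) (y : Fin N) :
    cUyM N u y = 1 + (ω N ^ (y : ℕ) - 1) •
      (Matrix.single (1 : Fin 2) 1 (1 : ℂ) ⊗ₖ PuM u) := by
  rw [cUyM, UyM]
  have h1 : ω N ^ (y : ℕ) • PuM u + (1 - PuM u)
      = (1 : Matrix ιV ιV ℂ) + (ω N ^ (y : ℕ) - 1) • PuM u := by
    rw [sub_smul, one_smul]
    abel
  rw [h1, Matrix.kronecker_add, Matrix.kronecker_smul, ← add_assoc,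
    ← Matrix.add_kronecker, E_sum, Matrix.one_kronecker_one]

lemma cUy_kron_eq (u : EuclideanSpace ℂ ιV) (y : Fin N) :
    cUyM N u y ⊗ₖ (1 : Matrix ιW ιW ℂ) = 1 + (ω N ^ (y : ℕ) - 1) • Qm u ιW := by
  rw [cUy_eq, Matrix.add_kronecker, Matrix.smul_kronecker, Matrix.one_kronecker_one, Qm]


lemma toE_std (y : Fin N) (f : EuclideanSpace ℂ (Fin N)) :
    Matrix.toEuclideanLin (Matrix.single y y (1 : ℂ)) f = f y • e N y := by
  apply euclid_ext; intro i
  rw [toE_apply]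
  simp only [Matrix.mulVec, dotProduct, Matrix.single, Matrix.of_apply,
    PiLp.smul_apply, smul_eq_mul, e_apply]
  by_cases h : i = y
  · subst h
    simp [ite_mul, one_mul, zero_mul, Finset.sum_ite_eq, mul_comm]
  · simp [Ne.symm h, h]

lemma ω_pow_eq_of_modeq {a b : ℕ} (h : a ≡ b [MOD N]) : ω N ^ a = ω N ^ b := by
  rw [ω_pow_mod a, ω_pow_mod b, h]

lemma fHat_succ_apply (k y : Fin N) :
    fHat N (k + 1) y = fHat N k y * ω N ^ (y : ℕ) := by
  rw [fHat_apply, fHat_apply, mul_assoc, ← pow_add]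
  congr 1
  apply ω_pow_eq_of_modeq
  have h1 : ((k + 1 : Fin N) : ℕ) ≡ (k : ℕ) + 1 [MOD N] := by
    rw [Fin.add_def]
    calc ((k : ℕ) + ((1 : Fin N) : ℕ)) % N ≡ (k : ℕ) + ((1 : Fin N) : ℕ) [MOD N] :=
          Nat.mod_modEq _ N
      _ ≡ (k : ℕ) + 1 [MOD N] := by
          apply Nat.ModEq.add_left
          rw [Fin.val_one']
          exact Nat.mod_modEq 1 N
  calc ((k + 1 : Fin N) : ℕ) * (y : ℕ) ≡ ((k : ℕ) + 1) * (y : ℕ) [MOD N] :=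
        h1.mul_right _
    _ = (k : ℕ) * (y : ℕ) + (y : ℕ) := by ring

variable {u : EuclideanSpace ℂ ιV}

lemma toE_oracle (u : EuclideanSpace ℂ ιV) (v : EuclideanSpace ℂ ((Fin 2 × ιV) × ιW))
    (k : Fin N) :
    Matrix.toEuclideanLin (oracleM N u ιW) (tp v (fHat N k))
      = tp (v - Matrix.toEuclideanLin (Qm u ιW) v) (fHat N k)
        + tp (Matrix.toEuclideanLin (Qm u ιW) v) (fHat N (k + 1)) := by
  set w := Matrix.toEuclideanLin (Qm u ιW) v with hw
  have hsum : Matrix.toEuclideanLin (oracleM N u ιW) (tp v (fHat N k))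
      = ∑ y : Fin N, Matrix.toEuclideanLin
          ((cUyM N u y ⊗ₖ (1 : Matrix ιW ιW ℂ)) ⊗ₖ Matrix.single y y (1 : ℂ))
          (tp v (fHat N k)) := by
    rw [oracleM, map_sum]
    exact LinearMap.sum_apply _ _ _
  have hterm : ∀ y : Fin N,
      Matrix.toEuclideanLin
          ((cUyM N u y ⊗ₖ (1 : Matrix ιW ιW ℂ)) ⊗ₖ Matrix.single y y (1 : ℂ))
          (tp v (fHat N k))
      = fHat N k y • tp v (e N y)
        + (fHat N k y * (ω N ^ (y : ℕ) - 1)) • tp w (e N y) := by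
    intro y
    rw [toE_kron, toE_std, cUy_kron_eq, map_add, _root_.map_smul,
      LinearMap.add_apply, LinearMap.smul_apply, toE_one, ← hw]
    rw [tp_smul_right, tp_add_left, tp_smul_left, smul_add, smul_smul]
  rw [hsum, Finset.sum_congr rfl (fun y _ => hterm y)]
  rw [tp_sub_left, tp_expand v (fHat N k), tp_expand w (fHat N k), tp_expand w (fHat N (k + 1))]
  rw [← Finset.sum_sub_distrib, ← Finset.sum_add_distrib]
  apply Finset.sum_congr rfl
  intro y _
  rw [fHat_succ_apply, mul_sub, mul_one, sub_smul]
  abel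

end mats

section norms
variable {ι : Type*} [Fintype ι] [DecidableEq ι] {N : ℕ} [NeZero N]

lemma norm_toE_unitary {A : Matrix ι ι ℂ} (hA : A ∈ Matrix.unitaryGroup ι ℂ)
    (x : EuclideanSpace ℂ ι) : ‖Matrix.toEuclideanLin A x‖ = ‖x‖ := by
  have hAA : Aᴴ * A = 1 := by
    rw [← Matrix.star_eq_conjTranspose]
    exact (Unitary.mem_iff.mp hA).1
  have h : (inner ℂ (Matrix.toEuclideanLin A x) (Matrix.toEuclideanLin A x) : ℂ)
      = inner ℂ x x := by
    rw [inner_toE_left, ← toE_mul, hAA, toE_one]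
  have h2 : ‖Matrix.toEuclideanLin A x‖ ^ 2 = ‖x‖ ^ 2 := by
    rw [← inner_self_eq_norm_sq (𝕜 := ℂ), ← inner_self_eq_norm_sq (𝕜 := ℂ), h]
  have := congrArg Real.sqrt h2
  simpa [Real.sqrt_sq, norm_nonneg] using this

lemma inner_toE_fix {M : Matrix ι ι ℂ} (hsa : Mᴴ = M) (hid : M * M = M)
    (a b : EuclideanSpace ℂ ι) :
    (inner ℂ (Matrix.toEuclideanLin M a) (Matrix.toEuclideanLin M b) : ℂ)
      = inner ℂ a (Matrix.toEuclideanLin M b) := by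
  rw [inner_toE_left, ← toE_mul, hsa, hid]

lemma pyth_add {M : Matrix ι ι ℂ} (hsa : Mᴴ = M) (hid : M * M = M)
    (a b : EuclideanSpace ℂ ι) :
    ‖(a - Matrix.toEuclideanLin M a) + Matrix.toEuclideanLin M b‖ ^ 2
      = ‖a - Matrix.toEuclideanLin M a‖ ^ 2 + ‖Matrix.toEuclideanLin M b‖ ^ 2 := by
  rw [norm_add_sq (𝕜 := ℂ)]
  have h0 : (inner ℂ (a - Matrix.toEuclideanLin M a) (Matrix.toEuclideanLin M b) : ℂ) = 0 := by
    rw [inner_sub_left, inner_toE_fix hsa hid, sub_self]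
  rw [h0]
  simp

lemma pyth_self {M : Matrix ι ι ℂ} (hsa : Mᴴ = M) (hid : M * M = M)
    (a : EuclideanSpace ℂ ι) :
    ‖a - Matrix.toEuclideanLin M a‖ ^ 2 + ‖Matrix.toEuclideanLin M a‖ ^ 2 = ‖a‖ ^ 2 := by
  have h := pyth_add hsa hid a a
  rw [sub_add_cancel] at h
  exact h.symm

lemma proj_sum_bound (P : Fin N → Matrix ι ι ℂ) (hsa : ∀ y, (P y)ᴴ = P y)
    (hid : ∀ y, P y * P y = P y) (horth : ∀ y y', y ≠ y' → P y * P y' = 0)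
    (v : EuclideanSpace ℂ ι) :
    ∑ y, ‖Matrix.toEuclideanLin (P y) v‖ ^ 2 ≤ ‖v‖ ^ 2 := by
  set R : Matrix ι ι ℂ := ∑ y, P y with hR
  set r : EuclideanSpace ℂ ι := Matrix.toEuclideanLin R v with hr
  have hRv : r = ∑ y, Matrix.toEuclideanLin (P y) v := by
    rw [hr, hR, map_sum]
    exact LinearMap.sum_apply _ _ _
  have hRsa : Rᴴ = R := by
    rw [hR, Matrix.conjTranspose_sum]
    exact Finset.sum_congr rfl fun y _ => hsa y
  have hRid : R * R = R := by
    rw [hR, Finset.sum_mul_sum]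
    rw [Finset.sum_congr rfl (fun y (_ : y ∈ Finset.univ) =>
      Finset.sum_eq_single y (fun y' _ hne => horth y y' (Ne.symm hne))
        (fun h => absurd (Finset.mem_univ y) h))]
    exact Finset.sum_congr rfl fun y _ => hid y
  have key1 : ∀ y, ‖Matrix.toEuclideanLin (P y) v‖ ^ 2
      = RCLike.re (inner ℂ v (Matrix.toEuclideanLin (P y) v) : ℂ) := by
    intro y
    rw [← inner_self_eq_norm_sq (𝕜 := ℂ), inner_toE_fix (hsa y) (hid y)]
  have key2 : ‖r‖ ^ 2 = RCLike.re (inner ℂ v r : ℂ) := by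
    rw [← inner_self_eq_norm_sq (𝕜 := ℂ), hr, inner_toE_fix hRsa hRid]
  have hsum : ∑ y, ‖Matrix.toEuclideanLin (P y) v‖ ^ 2 = ‖r‖ ^ 2 := by
    rw [key2, hRv, inner_sum, map_sum]
    exact Finset.sum_congr rfl fun y _ => key1 y
  rw [hsum]
  have hle : RCLike.re (inner ℂ v r : ℂ) ≤ ‖v‖ * ‖r‖ := re_inner_le_norm (𝕜 := ℂ) v r
  nlinarith [sq_nonneg (‖v‖ - ‖r‖), norm_nonneg r, norm_nonneg v, key2.trans_le hle]

lemma norm_sum_tp (φ : Fin N → EuclideanSpace ℂ ι) :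
    ‖∑ k, tp (φ k) (fHat N k)‖ ^ 2 = ∑ k, ‖φ k‖ ^ 2 := by
  rw [← inner_self_eq_norm_sq (𝕜 := ℂ), inner_sum]
  have h : ∀ l, (inner ℂ (∑ k, tp (φ k) (fHat N k)) (tp (φ l) (fHat N l)) : ℂ)
      = inner ℂ (φ l) (φ l) := by
    intro l
    rw [sum_inner, Finset.sum_congr rfl (fun k (_ : k ∈ Finset.univ) => by
      rw [inner_tp, inner_fHat])]
    simp
  rw [Finset.sum_congr rfl (fun l _ => h l), map_sum]
  exact Finset.sum_congr rfl fun k _ => inner_self_eq_norm_sq _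

lemma norm_tp_e (x : EuclideanSpace ℂ ι) (y : Fin N) :
    ‖tp x (e N y)‖ ^ 2 = ‖x‖ ^ 2 := by
  rw [norm_tp_sq]
  have : ‖e N y‖ = 1 := by
    rw [e, EuclideanSpace.norm_single, norm_one]
  rw [this]
  ring

end norms

section main
variable {ιV ιW : Type*} [Fintype ιV] [DecidableEq ιV] [Fintype ιW] [DecidableEq ιW]
variable {N : ℕ} [NeZero N]

lemma fin_sub_one_val {k : Fin N} (hk : k ≠ 0) : ((k - 1 : Fin N) : ℕ) = (k : ℕ) - 1 := by
  obtain ⟨m, rfl⟩ : ∃ m, N = m + 1 := ⟨N - 1, by omega⟩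
  rw [Fin.coe_sub_one, if_neg hk]

lemma main_ind (u : EuclideanSpace ℂ ιV) (hu : ‖u‖ = 1)
    (A : ℕ → Matrix ((Fin 2 × ιV) × ιW) ((Fin 2 × ιV) × ιW) ℂ)
    (hA : ∀ i, A i ∈ Matrix.unitaryGroup ((Fin 2 × ιV) × ιW) ℂ)
    (φ₀ : EuclideanSpace ℂ ((Fin 2 × ιV) × ιW)) (hφ₀ : ‖φ₀‖ = 1) (n : ℕ) :
    ∃ φ : Fin N → EuclideanSpace ℂ ((Fin 2 × ιV) × ιW),
      Matrix.toEuclideanLin (algOp A (oracleM N u ιW) n) (tp φ₀ (fHat N 0))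
        = ∑ k, tp (φ k) (fHat N k)
      ∧ (∀ k : Fin N, n < (k : ℕ) → φ k = 0)
      ∧ ∑ k, ‖φ k‖ ^ 2 ≤ 1 := by
  induction n with
  | zero =>
    refine ⟨fun k => if k = 0 then Matrix.toEuclideanLin (A 0) φ₀ else 0, ?_, ?_, ?_⟩
    · beta_reduce
      rw [show algOp A (oracleM N u ιW) 0
        = A 0 ⊗ₖ (1 : Matrix (Fin N) (Fin N) ℂ) from rfl]
      rw [toE_kron, toE_one]
      rw [Finset.sum_eq_single (0 : Fin N)
        (fun k _ hk => by simp [hk, tp_zero_left])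
        (fun h => absurd (Finset.mem_univ _) h)]
      rw [if_pos rfl]
    · intro k hk
      have hk0 : k ≠ 0 := fun h => by simp [h] at hk
      simp [hk0]
    · beta_reduce
      rw [Finset.sum_eq_single (0 : Fin N)
        (fun k _ hk => by simp [hk])
        (fun h => absurd (Finset.mem_univ _) h)]
      rw [if_pos rfl, norm_toE_unitary (hA 0), hφ₀]
      norm_num
  | succ n ih =>
    obtain ⟨φ, hrep, hsupp, hnorm⟩ := ih
    set Tq : EuclideanSpace ℂ ((Fin 2 × ιV) × ιW) → EuclideanSpace ℂ ((Fin 2 × ιV) × ιW) :=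
      fun x => Matrix.toEuclideanLin (Qm u ιW) x with hTq
    refine ⟨fun k => Matrix.toEuclideanLin (A (n + 1))
      ((φ k - Tq (φ k)) + Tq (φ (k - 1))), ?_, ?_, ?_⟩
    · beta_reduce
      rw [show algOp A (oracleM N u ιW) (n + 1)
        = (A (n + 1) ⊗ₖ (1 : Matrix (Fin N) (Fin N) ℂ)) * oracleM N u ιW
            * algOp A (oracleM N u ιW) n from rfl]
      rw [toE_mul, toE_mul, hrep, map_sum]
      have horc : ∀ k : Fin N,
          Matrix.toEuclideanLin (oracleM N u ιW) (tp (φ k) (fHat N k))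
          = tp (φ k - Tq (φ k)) (fHat N k) + tp (Tq (φ k)) (fHat N (k + 1)) :=
        fun k => toE_oracle u (φ k) k
      rw [Finset.sum_congr rfl fun k _ => horc k, Finset.sum_add_distrib]
      have hre : ∑ k : Fin N, tp (Tq (φ k)) (fHat N (k + 1))
          = ∑ k : Fin N, tp (Tq (φ (k - 1))) (fHat N k) := by
        apply Fintype.sum_equiv (Equiv.addRight (1 : Fin N))
        intro k
        simp
      rw [hre, ← Finset.sum_add_distrib, map_sum]
      apply Finset.sum_congr rfl
      intro k _
      rw [← tp_add_left, toE_kron, toE_one]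
    · intro k hk
      beta_reduce
      have hk0 : k ≠ 0 := by
        intro h
        rw [h] at hk
        simp at hk
      have h1 : φ k = 0 := hsupp k (by omega)
      have h2 : φ (k - 1) = 0 := by
        apply hsupp
        rw [fin_sub_one_val hk0]
        omega
      rw [h1, h2, hTq]
      simp
    · beta_reduce
      have hstep : ∀ k : Fin N,
          ‖Matrix.toEuclideanLin (A (n + 1)) ((φ k - Tq (φ k)) + Tq (φ (k - 1)))‖ ^ 2
          = ‖φ k - Tq (φ k)‖ ^ 2 + ‖Tq (φ (k - 1))‖ ^ 2 := by
        intro k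
        rw [norm_toE_unitary (hA (n + 1))]
        exact pyth_add (Qm_sa u) (Qm_idem hu) (φ k) (φ (k - 1))
      rw [Finset.sum_congr rfl fun k _ => hstep k, Finset.sum_add_distrib]
      have hre : ∑ k : Fin N, ‖Tq (φ (k - 1))‖ ^ 2 = ∑ k : Fin N, ‖Tq (φ k)‖ ^ 2 := by
        apply Fintype.sum_equiv (Equiv.subRight (1 : Fin N))
        intro k
        simp
      rw [hre, ← Finset.sum_add_distrib]
      calc ∑ k : Fin N, (‖φ k - Tq (φ k)‖ ^ 2 + ‖Tq (φ k)‖ ^ 2)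
          = ∑ k : Fin N, ‖φ k‖ ^ 2 :=
            Finset.sum_congr rfl fun k _ => pyth_self (Qm_sa u) (Qm_idem hu) (φ k)
        _ ≤ 1 := hnorm

end main
end
end QLB


noncomputable section

/-- **Query lower bound form of the main theorem.**
If a `q`-query algorithm solves the `N`-phase distinguishing problem with probability at
least `p ≥ 0` (success probability `∑_y ‖(Π_y ⊗ |e_y⟩⟨e_y|) ψ‖² ≥ p` for the final state
`ψ`), then `q ≥ p·N - 1`. -/
theorem stmt_10 {ιV ιW : Type*} [Fintype ιV] [DecidableEq ιV] [Fintype ιW] [DecidableEq ιW]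
    {N : ℕ} [NeZero N] (u : EuclideanSpace ℂ ιV) (hu : ‖u‖ = 1) (q : ℕ)
    (A : ℕ → Matrix ((Fin 2 × ιV) × ιW) ((Fin 2 × ιV) × ιW) ℂ)
    (hA : ∀ i, A i ∈ Matrix.unitaryGroup ((Fin 2 × ιV) × ιW) ℂ)
    (φ₀ : EuclideanSpace ℂ ((Fin 2 × ιV) × ιW)) (hφ₀ : ‖φ₀‖ = 1)
    (P : Fin N → Matrix ((Fin 2 × ιV) × ιW) ((Fin 2 × ιV) × ιW) ℂ)
    (hP_sa : ∀ y, (P y)ᴴ = P y) (hP_idem : ∀ y, P y * P y = P y)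
    (hP_orth : ∀ y y', y ≠ y' → P y * P y' = 0)
    (p : ℝ) (hp : 0 ≤ p)
    (hsucc : p ≤ ∑ y : Fin N,
        ‖Matrix.toEuclideanLin (P y ⊗ₖ Matrix.single y y (1 : ℂ))
          (Matrix.toEuclideanLin (algOp A (oracleM N u ιW) q) (tp φ₀ (fHat N 0)))‖ ^ 2) :
    p * N - 1 ≤ (q : ℝ) := by
  classical
  obtain ⟨φ, hrep, hsupp, hnorm⟩ := QLB.main_ind (N := N) u hu A hA φ₀ hφ₀ q
  set S : Finset (Fin N) := Finset.univ.filter (fun k : Fin N => (k : ℕ) ≤ q) with hS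
  have hcard : (S.card : ℝ) ≤ (q : ℝ) + 1 := by
    have h1 : S.card ≤ (Finset.range (q + 1)).card := by
      refine Finset.card_le_card_of_injOn (fun k : Fin N => (k : ℕ)) ?_ ?_
      · intro k hk
        show (k : ℕ) ∈ Finset.range (q + 1)
        rw [Finset.mem_range]
        rw [hS, Finset.mem_coe, Finset.mem_filter] at hk
        omega
      · intro a _ b _ h
        exact Fin.ext h
    rw [Finset.card_range] at h1
    exact_mod_cast h1
  set χ : Fin N → EuclideanSpace ℂ ((Fin 2 × ιV) × ιW) :=
    fun y => ∑ k, fHat N k y • Matrix.toEuclideanLin (P y) (φ k) with hχ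
  have hterm : ∀ y : Fin N,
      Matrix.toEuclideanLin (P y ⊗ₖ Matrix.single y y (1 : ℂ))
        (Matrix.toEuclideanLin (algOp A (oracleM N u ιW) q) (tp φ₀ (fHat N 0)))
      = tp (χ y) (e N y) := by
    intro y
    rw [hrep, map_sum, hχ, QLB.tp_sum_left]
    apply Finset.sum_congr rfl
    intro k _
    rw [QLB.toE_kron, QLB.toE_std, QLB.tp_smul_right, QLB.tp_smul_left]
  have hbound : ∀ y : Fin N, ‖χ y‖ ^ 2
      ≤ (N : ℝ)⁻¹ * ((S.card : ℝ)
          * ∑ k ∈ S, ‖Matrix.toEuclideanLin (P y) (φ k)‖ ^ 2) := by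
    intro y
    have hrestrict : χ y = ∑ k ∈ S, fHat N k y • Matrix.toEuclideanLin (P y) (φ k) := by
      symm
      apply Finset.sum_subset (Finset.subset_univ S)
      intro k _ hk
      rw [hS, Finset.mem_filter] at hk
      push_neg at hk
      rw [hsupp k (hk (Finset.mem_univ k))]
      simp
    have h1 : ‖χ y‖ ≤ (Real.sqrt N)⁻¹
        * ∑ k ∈ S, ‖Matrix.toEuclideanLin (P y) (φ k)‖ := by
      rw [hrestrict, Finset.mul_sum]
      refine (norm_sum_le _ _).trans ?_
      apply Finset.sum_le_sum
      intro k _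
      rw [norm_smul, QLB.fHat_apply, norm_mul]
      have hn : ‖((Real.sqrt N : ℝ) : ℂ)⁻¹‖ = (Real.sqrt N)⁻¹ := by
        rw [norm_inv, Complex.norm_real, Real.norm_eq_abs,
          abs_of_nonneg (Real.sqrt_nonneg _)]
      rw [hn, QLB.ω_norm_pow, mul_one]
    have h4 : ((Real.sqrt N)⁻¹) ^ 2 = (N : ℝ)⁻¹ := by
      rw [inv_pow, Real.sq_sqrt (Nat.cast_nonneg N)]
    have h2 : ‖χ y‖ ^ 2 ≤ (N : ℝ)⁻¹
        * (∑ k ∈ S, ‖Matrix.toEuclideanLin (P y) (φ k)‖) ^ 2 := by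
      calc ‖χ y‖ ^ 2
          ≤ ((Real.sqrt N)⁻¹ * ∑ k ∈ S, ‖Matrix.toEuclideanLin (P y) (φ k)‖) ^ 2 :=
            pow_le_pow_left₀ (norm_nonneg _) h1 2
        _ = ((Real.sqrt N)⁻¹) ^ 2
            * (∑ k ∈ S, ‖Matrix.toEuclideanLin (P y) (φ k)‖) ^ 2 := by ring
        _ = _ := by rw [h4]
    refine h2.trans ?_
    apply mul_le_mul_of_nonneg_left _ (by positivity)
    exact sq_sum_le_card_mul_sum_sq
  have hNpos : (0 : ℝ) < N := by
    exact_mod_cast Nat.pos_of_ne_zero (NeZero.ne N)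
  have hchain : p ≤ (N : ℝ)⁻¹ * ((q : ℝ) + 1) := by
    calc p ≤ ∑ y : Fin N,
          ‖Matrix.toEuclideanLin (P y ⊗ₖ Matrix.single y y (1 : ℂ))
            (Matrix.toEuclideanLin (algOp A (oracleM N u ιW) q) (tp φ₀ (fHat N 0)))‖ ^ 2 :=
          hsucc
      _ = ∑ y : Fin N, ‖χ y‖ ^ 2 :=
          Finset.sum_congr rfl fun y _ => by rw [hterm y, QLB.norm_tp_e]
      _ ≤ ∑ y : Fin N, (N : ℝ)⁻¹ * ((S.card : ℝ)
            * ∑ k ∈ S, ‖Matrix.toEuclideanLin (P y) (φ k)‖ ^ 2) :=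
          Finset.sum_le_sum fun y _ => hbound y
      _ = (N : ℝ)⁻¹ * ((S.card : ℝ)
            * ∑ k ∈ S, ∑ y : Fin N, ‖Matrix.toEuclideanLin (P y) (φ k)‖ ^ 2) := by
          rw [← Finset.mul_sum, ← Finset.mul_sum, Finset.sum_comm]
      _ ≤ (N : ℝ)⁻¹ * ((S.card : ℝ) * ∑ k ∈ S, ‖φ k‖ ^ 2) := by
          apply mul_le_mul_of_nonneg_left _ (by positivity)
          apply mul_le_mul_of_nonneg_left _ (by positivity)
          exact Finset.sum_le_sum fun k _ =>
            QLB.proj_sum_bound P hP_sa hP_idem hP_orth (φ k)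
      _ ≤ (N : ℝ)⁻¹ * ((S.card : ℝ) * 1) := by
          apply mul_le_mul_of_nonneg_left _ (by positivity)
          apply mul_le_mul_of_nonneg_left _ (by positivity)
          refine le_trans ?_ hnorm
          exact Finset.sum_le_sum_of_subset_of_nonneg (Finset.subset_univ S)
            (fun k _ _ => by positivity)
      _ ≤ (N : ℝ)⁻¹ * ((q : ℝ) + 1) := by
          rw [mul_one]
          exact mul_le_mul_of_nonneg_left hcard (by positivity)
  have hfin : p * N ≤ (q : ℝ) + 1 := by
    calc p * N ≤ ((N : ℝ)⁻¹ * ((q : ℝ) + 1)) * N :=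
          mul_le_mul_of_nonneg_right hchain hNpos.le
      _ = (q : ℝ) + 1 := by field_simp
  linarith


end
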